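/- Let E = {2^n : n ∈ ℕ} ∪ {2^n + 2n − 1 : n ∈ ℕ}. Then E is an I_0-set, but E + {0, 1} = {2^n : n ∈ ℕ} ∪ {2^n + 2n − 1 : n ∈ ℕ} ∪ {2^n + 1 : n ∈ ℕ} ∪ {2^n + 2n : n ∈ ℕ} is not an I_0-set. In particular, the sum of an I_0-set and a finite set need not be an I_0-set. -/

import Mathlib

open Filter Topology

noncomputable section

/-- A trigonometric polynomial. -/
def IsTrigPoly (ψ : ℕ → ℂ) : Prop :=
  ∃ (k : ℕ) (c : Fin k → ℂ) (α : Fin k → ℝ), ∀ n : ℕ,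
    ψ n = ∑ j, c j * Complex.exp (2 * Real.pi * Complex.I * (n : ℂ) * (α j : ℂ))

/-- A Bohr almost periodic sequence: a uniform limit of trigonometric polynomials. -/
def IsBohrAP (ψ : ℕ → ℂ) : Prop :=
  ∀ ε : ℝ, 0 < ε → ∃ φ : ℕ → ℂ, IsTrigPoly φ ∧ ∀ n : ℕ, ‖ψ n - φ n‖ < ε

/-- `E` is an `I₀`-set. -/
def IsI0Set (E : Set ℕ) : Prop :=
  ∀ f : ℕ → ℂ, (∃ C : ℝ, ∀ n ∈ E, ‖f n‖ ≤ C) →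
    ∃ ψ : ℕ → ℂ, IsBohrAP ψ ∧ ∀ n ∈ E, ψ n = f n

/-- `A` and `B` are separable by a Bohr rotation. -/
def SeparableByBohr (A B : Set ℕ) : Prop :=
  ∃ (d : ℕ) (α : Fin d → AddCircle (1 : ℝ)),
    closure ((fun n : ℕ => n • α) '' A) ∩ closure ((fun n : ℕ => n • α) '' B) = ∅

/-- `R` is a set of Bohr recurrence. -/
def IsBohrRecurrence (R : Set ℕ) : Prop :=
  ∀ (d : ℕ) (α : Fin d → AddCircle (1 : ℝ)),
    (0 : Fin d → AddCircle (1 : ℝ)) ∈ closure ((fun n : ℕ => n • α) '' R)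

/-- `r` is a lacunary sequence of positive integers. -/
def IsLacunarySeq (r : ℕ → ℕ) : Prop :=
  (∀ n, 0 < r n) ∧ StrictMono r ∧ ∃ c : ℝ, 1 < c ∧ ∀ n, c ≤ (r (n + 1) : ℝ) / (r n : ℝ)

/-- `r` is a sublacunary sequence of positive integers. -/
def IsSublacunarySeq (r : ℕ → ℕ) : Prop :=
  (∀ n, 0 < r n) ∧ StrictMono r ∧
    Tendsto (fun n : ℕ => Real.log (r n) / (n : ℝ)) atTop (𝓝 0)

open Complex

lemma isTrigPoly_zero : IsTrigPoly (fun _ => 0) :=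
  ⟨0, ![], ![], by simp⟩

lemma isTrigPoly_single (z : ℂ) (a : ℝ) :
    IsTrigPoly (fun m => z * Complex.exp (2 * Real.pi * Complex.I * (m : ℂ) * (a : ℂ))) :=
  ⟨1, ![z], ![a], by intro n; simp⟩

lemma IsTrigPoly.add {φ₁ φ₂ : ℕ → ℂ} (h₁ : IsTrigPoly φ₁) (h₂ : IsTrigPoly φ₂) :
    IsTrigPoly (fun m => φ₁ m + φ₂ m) := by
  obtain ⟨k₁, c₁, a₁, h₁⟩ := h₁
  obtain ⟨k₂, c₂, a₂, h₂⟩ := h₂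
  refine ⟨k₁ + k₂, Fin.append c₁ c₂, Fin.append a₁ a₂, fun n => ?_⟩
  show φ₁ n + φ₂ n = _
  rw [h₁ n, h₂ n, Fin.sum_univ_add]
  simp [Fin.append]

lemma IsTrigPoly.const_mul {φ : ℕ → ℂ} (h : IsTrigPoly φ) (z : ℂ) :
    IsTrigPoly (fun m => z * φ m) := by
  obtain ⟨k, c, a, h⟩ := h
  refine ⟨k, fun j => z * c j, a, fun n => ?_⟩
  show z * φ n = _
  rw [h n, Finset.mul_sum]
  simp [mul_assoc]

lemma IsTrigPoly.mul {φ₁ φ₂ : ℕ → ℂ} (h₁ : IsTrigPoly φ₁) (h₂ : IsTrigPoly φ₂) :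
    IsTrigPoly (fun m => φ₁ m * φ₂ m) := by
  obtain ⟨k₁, c₁, a₁, h₁⟩ := h₁
  obtain ⟨k₂, c₂, a₂, h₂⟩ := h₂
  refine ⟨k₁ * k₂, fun j => c₁ (finProdFinEquiv.symm j).1 * c₂ (finProdFinEquiv.symm j).2,
    fun j => a₁ (finProdFinEquiv.symm j).1 + a₂ (finProdFinEquiv.symm j).2, fun n => ?_⟩
  show φ₁ n * φ₂ n = _
  rw [h₁ n, h₂ n, Finset.sum_mul_sum, ← Fintype.sum_prod_type']
  apply Fintype.sum_equiv finProdFinEquiv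
  intro p
  simp only [Equiv.symm_apply_apply]
  rw [mul_mul_mul_comm, ← Complex.exp_add]
  congr 1
  push_cast
  ring

lemma isTrigPoly_sum {ι : Type*} (s : Finset ι) (Φ : ι → ℕ → ℂ)
    (h : ∀ i ∈ s, IsTrigPoly (Φ i)) : IsTrigPoly (fun m => ∑ i ∈ s, Φ i m) := by
  classical
  induction s using Finset.induction_on with
  | empty => simpa using isTrigPoly_zero
  | @insert x s' hx ih =>
    simp only [Finset.sum_insert hx]
    exact (h x (Finset.mem_insert_self x s')).add
      (ih fun i hi => h i (Finset.mem_insert_of_mem hi))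


lemma twoPiI_eq (x a : ℝ) :
    2 * (Real.pi : ℂ) * I * (x : ℂ) * (a : ℂ) = ((2 * Real.pi * x * a : ℝ) : ℂ) * I := by
  push_cast; ring

lemma abs_exp_I_sub_one (θ : ℝ) : norm (Complex.exp ((θ : ℂ) * I) - 1) ≤ |θ| := by
  have hre : (Complex.exp ((θ : ℂ) * I) - 1).re = Real.cos θ - 1 := by
    simp [Complex.exp_ofReal_mul_I_re]
  have him : (Complex.exp ((θ : ℂ) * I) - 1).im = Real.sin θ := by
    simp [Complex.exp_ofReal_mul_I_im]
  rw [Complex.norm_def, Complex.normSq_apply, hre, him]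
  rw [← Real.sqrt_sq_eq_abs]
  apply Real.sqrt_le_sqrt
  have h1 := Real.sin_sq_eq_half_sub (θ / 2)
  have h2 := Real.sin_sq_le_sq (x := θ / 2)
  have h3 : 2 * (θ / 2) = θ := by ring
  rw [h3] at h1
  nlinarith [Real.sin_sq_add_cos_sq θ]

lemma abs_exp_I_sub_exp_I (X Y : ℝ) :
    norm (Complex.exp ((X : ℂ) * I) - Complex.exp ((Y : ℂ) * I)) ≤ |X - Y| := by
  have : Complex.exp ((X : ℂ) * I) - Complex.exp ((Y : ℂ) * I)
      = Complex.exp ((Y : ℂ) * I) * (Complex.exp (((X - Y : ℝ) : ℂ) * I) - 1) := by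
    rw [mul_sub, ← Complex.exp_add, mul_one]
    push_cast
    ring_nf
  rw [this, norm_mul, Complex.norm_exp_ofReal_mul_I, one_mul]
  exact abs_exp_I_sub_one _


/-- recursive left endpoints -/
noncomputable def aSeq (lam : ℕ → ℕ) (θ : ℕ → ℝ) : ℕ → ℝ
  | 0 => (θ 0 - 3/20) / lam 0
  | i+1 => (θ (i+1) - 3/20 + ⌈(lam (i+1) : ℝ) * aSeq lam θ i - (θ (i+1) - 3/20)⌉) / lam (i+1)

lemma nested_exists (lam : ℕ → ℕ) (θ : ℕ → ℝ) (hpos : ∀ i, 1 ≤ lam i)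
    (hrat : ∀ i, 13 * lam i ≤ 3 * lam (i+1)) :
    ∃ α : ℝ, ∀ i, ∃ z : ℤ, |(lam i : ℝ) * α - (θ i + z)| ≤ 3/20 := by
  set a := aSeq lam θ with ha
  have hL : ∀ i, (1:ℝ) ≤ (lam i : ℝ) := fun i => by exact_mod_cast hpos i
  have hLpos : ∀ i, (0:ℝ) < (lam i : ℝ) := fun i => lt_of_lt_of_le one_pos (hL i)
  -- (A) endpoint congruence
  have hA : ∀ i, ∃ z : ℤ, (lam i : ℝ) * a i = θ i - 3/20 + z := by
    intro i
    cases i with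
    | zero =>
      refine ⟨0, ?_⟩
      show (lam 0 : ℝ) * ((θ 0 - 3/20) / lam 0) = _
      rw [mul_div_cancel₀ _ (hLpos 0).ne']
      simp
    | succ i =>
      refine ⟨⌈(lam (i+1) : ℝ) * a i - (θ (i+1) - 3/20)⌉, ?_⟩
      show (lam (i+1) : ℝ) * ((θ (i+1) - 3/20 + _) / lam (i+1)) = _
      rw [mul_div_cancel₀ _ (hLpos (i+1)).ne']
  -- (B) step bounds
  have hB : ∀ i, a i ≤ a (i+1) ∧ a (i+1) + (3/10) / lam (i+1) ≤ a i + (3/10) / lam i := by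
    intro i
    have hceil1 : (lam (i+1) : ℝ) * a i - (θ (i+1) - 3/20)
        ≤ ⌈(lam (i+1) : ℝ) * a i - (θ (i+1) - 3/20)⌉ := Int.le_ceil _
    have hceil2 : (⌈(lam (i+1) : ℝ) * a i - (θ (i+1) - 3/20)⌉ : ℝ)
        < (lam (i+1) : ℝ) * a i - (θ (i+1) - 3/20) + 1 := Int.ceil_lt_add_one _
    have hdef : a (i+1) = (θ (i+1) - 3/20 + ⌈(lam (i+1) : ℝ) * a i - (θ (i+1) - 3/20)⌉) / lam (i+1) := rfl
    have h1 : a i ≤ a (i+1) := by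
      rw [hdef, le_div_iff₀ (hLpos (i+1))]
      nlinarith [hceil1]
    have hratR : 13 * (lam i : ℝ) ≤ 3 * (lam (i+1) : ℝ) := by exact_mod_cast hrat i
    have h2 : a (i+1) + (3/10) / lam (i+1) ≤ a i + (3/10) / lam i := by
      rw [hdef]
      have key : (13:ℝ)/10 ≤ 3/10 * (lam (i+1):ℝ) / lam i := by
        rw [le_div_iff₀ (hLpos i)]; linarith
      rw [← add_div, div_le_iff₀ (hLpos (i+1)), add_mul, div_mul_eq_mul_div]
      have key2 : (3:ℝ)/10 * (lam (i+1):ℝ) / lam i ≤ (3/10 / (lam i : ℝ)) * lam (i+1) := by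
        rw [div_mul_eq_mul_div, div_mul_eq_mul_div]; ring_nf; rfl
      nlinarith [hceil2, hLpos (i+1)]
    exact ⟨h1, h2⟩
  have hmono : Monotone a := monotone_nat_of_le_succ fun i => (hB i).1
  have hnest : ∀ i j, i ≤ j → a j + (3/10) / lam j ≤ a i + (3/10) / lam i := by
    intro i j hij
    induction j with
    | zero => simp_all
    | succ j ih =>
      rcases Nat.lt_or_ge i (j+1) with h | h
      · exact le_trans (hB j).2 (ih (Nat.lt_succ_iff.mp h))
      · have : i = j + 1 := le_antisymm hij h
        subst this; rfl
  have hub : ∀ j, a j ≤ a 0 + (3/10) / lam 0 := by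
    intro j
    have := hnest 0 j (Nat.zero_le j)
    have hpos' : 0 < (3/10) / (lam j : ℝ) := div_pos (by norm_num) (hLpos j)
    linarith
  have hbdd : BddAbove (Set.range a) := ⟨a 0 + (3/10)/lam 0, by rintro x ⟨j, rfl⟩; exact hub j⟩
  set α := ⨆ i, a i with hα
  have hge : ∀ i, a i ≤ α := fun i => le_ciSup hbdd i
  have hle : ∀ i, α ≤ a i + (3/10) / lam i := by
    intro i
    apply ciSup_le
    intro j
    rcases Nat.le_total i j with h | h
    · have := hnest i j h
      have hpos' : 0 < (3/10) / (lam j : ℝ) := div_pos (by norm_num) (hLpos j)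
      linarith
    · have hpos' : 0 < (3/10) / (lam i : ℝ) := div_pos (by norm_num) (hLpos i)
      have := hmono h
      linarith
  refine ⟨α, fun i => ?_⟩
  obtain ⟨z, hz⟩ := hA i
  refine ⟨z, ?_⟩
  have h1 : (lam i : ℝ) * a i ≤ (lam i : ℝ) * α := by
    exact mul_le_mul_of_nonneg_left (hge i) (hLpos i).le
  have h2 : (lam i : ℝ) * α ≤ (lam i : ℝ) * a i + 3/10 := by
    have := mul_le_mul_of_nonneg_left (hle i) (hLpos i).le
    rw [mul_add, mul_div_cancel₀ _ (hLpos i).ne'] at this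
    linarith
  rw [abs_le]
  constructor <;> nlinarith [hz]


lemma approx_unimodular (lam : ℕ → ℕ) (hpos : ∀ i, 1 ≤ lam i)
    (hrat : ∀ i, 13 * lam i ≤ 3 * lam (i+1)) (w : ℕ → ℂ) (hw : ∀ i, norm (w i) = 1) :
    ∃ α : ℝ, ∀ i, norm
      (Complex.exp (2 * (Real.pi:ℂ) * I * (lam i : ℂ) * (α : ℂ)) - w i) ≤ 19/20 := by
  obtain ⟨α, hα⟩ := nested_exists lam (fun i => (w i).arg / (2 * Real.pi)) hpos hrat
  refine ⟨α, fun i => ?_⟩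
  obtain ⟨z, hz⟩ := hα i
  have h1 : Complex.exp (((2 * Real.pi * z : ℝ):ℂ) * I) = 1 := by
    have := Complex.exp_int_mul_two_pi_mul_I z
    rw [← this]; push_cast; ring_nf
  have hwi : w i = Complex.exp ((((w i).arg + 2 * Real.pi * z : ℝ) : ℂ) * I) := by
    have : ((((w i).arg + 2 * Real.pi * z : ℝ)) : ℂ) * I
        = ((w i).arg : ℂ) * I + (((2 * Real.pi * z : ℝ)):ℂ) * I := by push_cast; ring
    rw [this, Complex.exp_add, h1, mul_one]
    conv_lhs => rw [← Complex.norm_mul_exp_arg_mul_I (w i)]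
    rw [hw i]
    norm_num
  have hcast : 2 * (Real.pi:ℂ) * I * (lam i : ℂ) * (α : ℂ)
      = ((2 * Real.pi * (lam i) * α : ℝ) : ℂ) * I := by push_cast; ring
  rw [hcast, hwi]
  refine le_trans (abs_exp_I_sub_exp_I _ _) ?_
  have hpi : (0:ℝ) < Real.pi := Real.pi_pos
  have key : 2 * Real.pi * (lam i) * α - ((w i).arg + 2 * Real.pi * z)
      = 2 * Real.pi * ((lam i : ℝ) * α - ((w i).arg / (2 * Real.pi) + z)) := by
    field_simp
  rw [key, abs_mul, abs_of_pos (by linarith : (0:ℝ) < 2 * Real.pi)]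
  have : 2 * Real.pi * |(lam i : ℝ) * α - ((w i).arg / (2 * Real.pi) + z)| ≤ 2 * Real.pi * (3/20) :=
    mul_le_mul_of_nonneg_left (hz) (by linarith)
  refine le_trans this ?_
  nlinarith [Real.pi_lt_d2]

lemma unimod_decomp (z : ℂ) (hz : norm z ≤ 1) :
    ∃ u v : ℂ, norm u = 1 ∧ norm v = 1 ∧ z = (u + v) / 2 := by
  by_cases h0 : z = 0
  · exact ⟨1, -1, by simp, by simp, by simp [h0]⟩
  · set r := norm z with hr
    have hrpos : 0 < r := by simpa [hr] using norm_pos_iff.mpr h0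
    set s := Real.sqrt (1 - r^2) with hs
    have hs2 : s^2 = 1 - r^2 := Real.sq_sqrt (by nlinarith)
    set w := z / r with hw
    have habsw : norm w = 1 := by
      rw [hw, norm_div, Complex.norm_real, Real.norm_eq_abs, abs_of_pos hrpos]
      exact div_self hrpos.ne'
    refine ⟨w * (r + s * I), w * (r - s * I), ?_, ?_, ?_⟩
    · rw [norm_mul, habsw, one_mul]
      have : norm ((r:ℂ) + s * I) = Real.sqrt (r^2 + s^2) := by
        rw [Complex.norm_def, Complex.normSq_apply]
        simp
        ring_nf
      rw [this, hs2]
      rw [show r^2 + (1 - r^2) = 1 by ring, Real.sqrt_one]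
    · rw [norm_mul, habsw, one_mul]
      have : norm ((r:ℂ) - s * I) = Real.sqrt (r^2 + s^2) := by
        rw [Complex.norm_def, Complex.normSq_apply]
        simp
        ring_nf
      rw [this, hs2]
      rw [show r^2 + (1 - r^2) = 1 by ring, Real.sqrt_one]
    · have : w * (r + s*I) + w * (r - s*I) = w * (2*r) := by ring
      have hrne : (r:ℂ) ≠ 0 := by exact_mod_cast hrpos.ne'
      rw [this, hw]
      field_simp


lemma piece_interp (P : Set ℕ) (hinf : P.Infinite)
    (hpos : ∀ m ∈ P, 1 ≤ m) (hrat : ∀ v ∈ P, ∀ w ∈ P, v < w → 13 * v ≤ 3 * w)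
    (f : ℕ → ℂ) (hf : ∀ m ∈ P, norm (f m) ≤ 1) :
    ∃ ψ : ℕ → ℂ, IsTrigPoly ψ ∧ (∀ m, norm (ψ m) ≤ 1) ∧
      ∀ m ∈ P, norm (ψ m - f m) ≤ 19/20 := by
  classical
  set p : ℕ → Prop := fun m => m ∈ P with hp
  have hinf' : (setOf p).Infinite := hinf
  set lam : ℕ → ℕ := Nat.nth p with hlam
  have hmem : ∀ i, lam i ∈ P := fun i => Nat.nth_mem_of_infinite hinf' i
  have hmono : StrictMono lam := Nat.nth_strictMono hinf'
  have hpos' : ∀ i, 1 ≤ lam i := fun i => hpos _ (hmem i)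
  have hrat' : ∀ i, 13 * lam i ≤ 3 * lam (i+1) :=
    fun i => hrat _ (hmem i) _ (hmem (i+1)) (hmono (Nat.lt_succ_self i))
  -- decompose f (lam i) into unimodular average
  have hdec : ∀ i : ℕ, ∃ u v : ℂ, norm u = 1 ∧ norm v = 1 ∧
      f (lam i) = (u + v) / 2 := fun i => unimod_decomp _ (hf _ (hmem i))
  choose u v hu hv huv using hdec
  obtain ⟨α₁, hα₁⟩ := approx_unimodular lam hpos' hrat' u hu
  obtain ⟨α₂, hα₂⟩ := approx_unimodular lam hpos' hrat' v hv
  refine ⟨fun m => (1/2 : ℂ) * Complex.exp (2 * (Real.pi:ℂ) * Complex.I * (m:ℂ) * (α₁:ℂ))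
      + (1/2 : ℂ) * Complex.exp (2 * (Real.pi:ℂ) * Complex.I * (m:ℂ) * (α₂:ℂ)), ?_, ?_, ?_⟩
  · exact (isTrigPoly_single _ _).add (isTrigPoly_single _ _)
  · intro m
    refine le_trans (norm_add_le _ _) ?_
    rw [norm_mul, norm_mul]
    have e1 : norm (Complex.exp (2 * (Real.pi:ℂ) * Complex.I * (m:ℂ) * (α₁:ℂ))) = 1 := by
      have : 2 * (Real.pi:ℂ) * Complex.I * (m:ℂ) * (α₁:ℂ)
          = ((2 * Real.pi * m * α₁ : ℝ) : ℂ) * Complex.I := by push_cast; ring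
      rw [this, Complex.norm_exp_ofReal_mul_I]
    have e2 : norm (Complex.exp (2 * (Real.pi:ℂ) * Complex.I * (m:ℂ) * (α₂:ℂ))) = 1 := by
      have : 2 * (Real.pi:ℂ) * Complex.I * (m:ℂ) * (α₂:ℂ)
          = ((2 * Real.pi * m * α₂ : ℝ) : ℂ) * Complex.I := by push_cast; ring
      rw [this, Complex.norm_exp_ofReal_mul_I]
    rw [e1, e2]
    norm_num
  · intro m hm
    obtain ⟨i, hi⟩ : ∃ i, lam i = m := by
      have : m ∈ Set.range (Nat.nth p) := by
        rw [Nat.range_nth_of_infinite hinf']; exact hm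
      exact this
    subst hi
    rw [huv i]
    have key : (1/2 : ℂ) * Complex.exp (2 * (Real.pi:ℂ) * Complex.I * ((lam i):ℂ) * (α₁:ℂ))
        + (1/2 : ℂ) * Complex.exp (2 * (Real.pi:ℂ) * Complex.I * ((lam i):ℂ) * (α₂:ℂ))
        - (u i + v i) / 2
        = (1/2 : ℂ) * ((Complex.exp (2 * (Real.pi:ℂ) * Complex.I * ((lam i):ℂ) * (α₁:ℂ)) - u i)
          + (Complex.exp (2 * (Real.pi:ℂ) * Complex.I * ((lam i):ℂ) * (α₂:ℂ)) - v i)) := by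
      ring
    rw [key, norm_mul]
    have : norm ((Complex.exp (2 * (Real.pi:ℂ) * Complex.I * ((lam i):ℂ) * (α₁:ℂ)) - u i)
          + (Complex.exp (2 * (Real.pi:ℂ) * Complex.I * ((lam i):ℂ) * (α₂:ℂ)) - v i)) ≤ 19/20 + 19/20 :=
      le_trans (norm_add_le _ _) (add_le_add (hα₁ i) (hα₂ i))
    calc norm ((1:ℂ)/2) * norm _ ≤ norm ((1:ℂ)/2) * (19/20 + 19/20) := by
          exact mul_le_mul_of_nonneg_left this (norm_nonneg _)
      _ ≤ 19/20 := by norm_num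


noncomputable def resInd (M a : ℕ) (m : ℕ) : ℂ :=
  ∑ j : Fin M, ((M:ℂ)⁻¹ * Complex.exp (-(2 * (Real.pi:ℂ) * Complex.I * (a:ℂ) * (((j:ℕ):ℝ)/(M:ℝ) : ℝ))))
    * Complex.exp (2 * (Real.pi:ℂ) * Complex.I * (m:ℂ) * ((((j:ℕ):ℝ)/(M:ℝ) : ℝ) : ℂ))

lemma isTrigPoly_resInd (M a : ℕ) : IsTrigPoly (resInd M a) :=
  ⟨M, fun j => (M:ℂ)⁻¹ * Complex.exp (-(2 * (Real.pi:ℂ) * Complex.I * (a:ℂ) * (((j:ℕ):ℝ)/(M:ℝ) : ℝ))),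
   fun j => ((j:ℕ):ℝ)/(M:ℝ), fun n => rfl⟩

lemma two_pi_I_ne_zero' : (2 * (Real.pi:ℂ) * Complex.I) ≠ 0 := by
  simp [Real.pi_ne_zero, Complex.I_ne_zero]

lemma resInd_eq (M a : ℕ) (hM : 1 ≤ M) (m : ℕ) :
    resInd M a m = if m % M = a % M then 1 else 0 := by
  have hMR : (0:ℝ) < (M:ℝ) := by exact_mod_cast hM
  have hMC : (M:ℂ) ≠ 0 := by exact_mod_cast hMR.ne'
  set x : ℝ := ((m:ℝ) - (a:ℝ))/(M:ℝ) with hx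
  set e : ℂ := Complex.exp (2 * (Real.pi:ℂ) * Complex.I * (x : ℂ)) with he
  have hterm : ∀ j : Fin M,
      ((M:ℂ)⁻¹ * Complex.exp (-(2 * (Real.pi:ℂ) * Complex.I * (a:ℂ) * (((j:ℕ):ℝ)/(M:ℝ) : ℝ))))
        * Complex.exp (2 * (Real.pi:ℂ) * Complex.I * (m:ℂ) * ((((j:ℕ):ℝ)/(M:ℝ) : ℝ) : ℂ))
      = (M:ℂ)⁻¹ * e ^ (j:ℕ) := by
    intro j
    rw [mul_assoc, ← Complex.exp_add, he, ← Complex.exp_nat_mul]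
    congr 2
    rw [hx]
    push_cast
    field_simp
    ring
  rw [resInd, Finset.sum_congr rfl (fun j _ => hterm j), ← Finset.mul_sum,
    Fin.sum_univ_eq_sum_range (fun j => e ^ j) M]
  have heM : e ^ M = 1 := by
    rw [he, ← Complex.exp_nat_mul]
    have : (M:ℂ) * (2 * (Real.pi:ℂ) * Complex.I * (x : ℂ))
        = (((m:ℤ) - (a:ℤ)) : ℂ) * (2 * (Real.pi:ℂ) * Complex.I) := by
      rw [hx]; push_cast; field_simp
    rw [this]
    exact_mod_cast Complex.exp_int_mul_two_pi_mul_I ((m:ℤ) - (a:ℤ))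
  by_cases h : m % M = a % M
  · rw [if_pos h]
    have hmod : m ≡ a [MOD M] := h
    obtain ⟨q, hq⟩ := (Nat.modEq_iff_dvd (n := M)).mp hmod.symm
    -- hq : (m:ℤ) - (a:ℤ) = M * q  (check direction)
    have hxq : x = (q:ℝ) := by
      rw [hx]
      have : (m:ℝ) - (a:ℝ) = (M:ℝ) * (q:ℝ) := by exact_mod_cast hq
      rw [this]
      field_simp
    have he1 : e = 1 := by
      rw [he, hxq]
      have : 2 * (Real.pi:ℂ) * Complex.I * ((q:ℝ):ℂ) = (q:ℂ) * (2 * (Real.pi:ℂ) * Complex.I) := by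
        push_cast; ring
      rw [this]
      exact_mod_cast Complex.exp_int_mul_two_pi_mul_I q
    rw [he1]
    simp [Finset.sum_const, inv_mul_cancel₀ hMC]
  · rw [if_neg h]
    have hne : e ≠ 1 := by
      intro habs
      rw [he, Complex.exp_eq_one_iff] at habs
      obtain ⟨n, hn⟩ := habs
      have h2 : (x:ℂ) * (2 * (Real.pi:ℂ) * Complex.I) = (n:ℂ) * (2 * (Real.pi:ℂ) * Complex.I) := by
        rw [← hn]; ring
      have hxn : (x:ℂ) = (n:ℂ) := mul_right_cancel₀ two_pi_I_ne_zero' h2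
      have hxr : x = (n:ℝ) := by exact_mod_cast hxn
      rw [hx, div_eq_iff hMR.ne'] at hxr
      have hz : (m:ℤ) - (a:ℤ) = n * M := by exact_mod_cast hxr
      have hdvd : (M:ℤ) ∣ (a:ℤ) - (m:ℤ) := ⟨-n, by linarith⟩
      exact h ((Nat.modEq_iff_dvd (n := M)).mpr hdvd)
    rw [geom_sum_eq hne, heM]
    simp


lemma isTrigPoly_sum_range (K : ℕ) (Φ : ℕ → ℕ → ℂ) (h : ∀ k, IsTrigPoly (Φ k)) :
    IsTrigPoly (fun m => ∑ k ∈ Finset.range K, Φ k m) := by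
  induction K with
  | zero => simpa using isTrigPoly_zero
  | succ K ih =>
    have : (fun m => ∑ k ∈ Finset.range (K+1), Φ k m)
        = fun m => (∑ k ∈ Finset.range K, Φ k m) + Φ K m := by
      funext m; rw [Finset.sum_range_succ]
    rw [this]
    exact ih.add (h K)

/-- iteration: uniform approximate interpolation by trig polys implies I₀. -/
lemma isI0_of_approx (E : Set ℕ)
    (happrox : ∀ f : ℕ → ℂ, (∀ m ∈ E, norm (f m) ≤ 1) →
      ∃ ψ : ℕ → ℂ, IsTrigPoly ψ ∧ (∀ m, norm (ψ m) ≤ 1) ∧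
        ∀ m ∈ E, norm (ψ m - f m) ≤ 19/20) :
    IsI0Set E := by
  intro f ⟨C, hC⟩
  classical
  set C' : ℝ := max C 1 with hC'
  have hC'pos : 0 < C' := lt_of_lt_of_le one_pos (le_max_right _ _)
  have hC'ne : (C' : ℂ) ≠ 0 := by
    simpa using (Complex.ofReal_ne_zero).mpr hC'pos.ne'
  -- recursively defined residual functions and trig polys
  have step : ∀ g : ℕ → ℂ, (∀ m ∈ E, norm (g m) ≤ 1) →
      ∃ ψ : ℕ → ℂ, IsTrigPoly ψ ∧ (∀ m, norm (ψ m) ≤ 1) ∧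
        ∀ m ∈ E, norm (ψ m - g m) ≤ 19/20 := happrox
  choose Ψ hΨ1 hΨ2 hΨ3 using step
  -- g k : residual at stage k, as a subtype to carry the invariant
  let g : ℕ → {g : ℕ → ℂ // ∀ m ∈ E, norm (g m) ≤ 1} :=
    fun k => Nat.rec
      ⟨fun m => f m / C', by
        intro m hm
        rw [norm_div, Complex.norm_real, Real.norm_eq_abs, abs_of_pos hC'pos, div_le_one hC'pos]
        exact le_trans (hC m hm) (le_max_left _ _)⟩
      (fun _ prev => ⟨fun m => (prev.1 m - Ψ prev.1 prev.2 m) / (19/20 : ℂ), by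
        intro m hm
        rw [norm_div]
        have h1 : norm ((19:ℂ)/20) = 19/20 := by
          rw [norm_div]
          norm_num
        rw [h1, div_le_one (by norm_num)]
        have := hΨ3 prev.1 prev.2 m hm
        rw [← norm_neg]
        simpa using this⟩) k
  set ψk : ℕ → ℕ → ℂ := fun k => Ψ (g k).1 (g k).2 with hψk
  -- telescoping
  have htel : ∀ m ∈ E, ∀ K : ℕ,
      (19/20 : ℂ)^K * (g K).1 m = f m / C' - ∑ k ∈ Finset.range K, (19/20 : ℂ)^k * ψk k m := by
    intro m hm K
    induction K with
    | zero => simp [g]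
    | succ K ih =>
      rw [Finset.sum_range_succ]
      have hgK : (g (K+1)).1 m = ((g K).1 m - ψk K m) / (19/20 : ℂ) := rfl
      rw [pow_succ, hgK, mul_assoc]
      have h1920 : (19/20 : ℂ) ≠ 0 := by norm_num
      rw [mul_div_cancel₀ _ h1920]
      linear_combination ih
  have hnorm : ∀ k m, ‖(19/20 : ℂ)^k * ψk k m‖ ≤ (19/20 : ℝ)^k := by
    intro k m
    rw [norm_mul, norm_pow]
    have h1 : ‖(19/20 : ℂ)‖ = (19/20 : ℝ) := by
      rw [show (19/20 : ℂ) = ((19/20 : ℝ) : ℂ) by norm_num, Complex.norm_real]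
      norm_num
    rw [h1]
    calc (19/20 : ℝ)^k * ‖ψk k m‖ ≤ (19/20 : ℝ)^k * 1 := by
          apply mul_le_mul_of_nonneg_left _ (by positivity)
          exact hΨ2 _ _ m
      _ = (19/20 : ℝ)^k := mul_one _
  have hsum : ∀ m, Summable (fun k => (19/20 : ℂ)^k * ψk k m) := by
    intro m
    apply Summable.of_norm
    exact Summable.of_nonneg_of_le (fun k => norm_nonneg _) (fun k => hnorm k m)
      (summable_geometric_of_lt_one (by norm_num) (by norm_num))
  refine ⟨fun m => (C' : ℂ) * ∑' k, (19/20 : ℂ)^k * ψk k m, ?_, ?_⟩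
  · -- Bohr almost periodic
    intro ε hε
    have htend : Filter.Tendsto (fun K => (C' * 20) * (19/20 : ℝ)^K) atTop (𝓝 0) := by
      have := tendsto_pow_atTop_nhds_zero_of_lt_one (by norm_num : (0:ℝ) ≤ 19/20)
        (by norm_num : (19/20:ℝ) < 1)
      simpa using this.const_mul (C' * 20)
    obtain ⟨K, hK⟩ := (htend.eventually (eventually_lt_nhds hε)).exists
    refine ⟨fun m => (C' : ℂ) * ∑ k ∈ Finset.range K, (19/20 : ℂ)^k * ψk k m, ?_, ?_⟩
    · exact (isTrigPoly_sum_range K (fun k m => (19/20 : ℂ)^k * ψk k m)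
        (fun k => (hΨ1 _ _).const_mul _)).const_mul _
    · intro m
      have hsplit := Summable.sum_add_tsum_nat_add K (hsum m)
      show norm ((C' : ℂ) * ∑' k, (19/20 : ℂ)^k * ψk k m
          - (C' : ℂ) * ∑ k ∈ Finset.range K, (19/20 : ℂ)^k * ψk k m) < ε
      have : (C' : ℂ) * ∑' k, (19/20 : ℂ)^k * ψk k m
          - (C' : ℂ) * ∑ k ∈ Finset.range K, (19/20 : ℂ)^k * ψk k m
          = (C' : ℂ) * ∑' k, (19/20 : ℂ)^(k + K) * ψk (k + K) m := by
        rw [← hsplit]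
        ring
      rw [this]
      have htail : ‖∑' k, (19/20 : ℂ)^(k + K) * ψk (k + K) m‖ ≤ (19/20 : ℝ)^K * 20 := by
        refine le_trans (norm_tsum_le_tsum_norm ?_) ?_
        · apply Summable.of_nonneg_of_le (fun k => norm_nonneg _)
            (fun k => hnorm (k + K) m)
          exact ((summable_geometric_of_lt_one (by norm_num) (by norm_num)).comp_injective
            (add_left_injective K))
        · have hle : ∀ k : ℕ, ‖(19/20 : ℂ)^(k+K) * ψk (k+K) m‖ ≤ (19/20 : ℝ)^(k+K) :=
            fun k => hnorm (k + K) m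
          calc (∑' k, ‖(19/20 : ℂ)^(k+K) * ψk (k+K) m‖)
              ≤ ∑' k : ℕ, (19/20 : ℝ)^(k+K) := by
                apply Summable.tsum_le_tsum hle
                · apply Summable.of_nonneg_of_le (fun k => norm_nonneg _) hle
                  exact ((summable_geometric_of_lt_one (by norm_num) (by norm_num)).comp_injective
                    (add_left_injective K))
                · exact ((summable_geometric_of_lt_one (by norm_num) (by norm_num)).comp_injective
                    (add_left_injective K))
            _ = (19/20 : ℝ)^K * 20 := by
                have : ∀ k : ℕ, (19/20 : ℝ)^(k+K) = (19/20 : ℝ)^K * (19/20:ℝ)^k := by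
                  intro k; rw [pow_add]; ring
                rw [tsum_congr this, tsum_mul_left, tsum_geometric_of_lt_one (by norm_num)
                  (by norm_num)]
                norm_num
      calc norm ((C' : ℂ) * ∑' k, (19/20 : ℂ)^(k + K) * ψk (k + K) m)
          = C' * ‖∑' k, (19/20 : ℂ)^(k + K) * ψk (k + K) m‖ := by
            rw [norm_mul, Complex.norm_real, Real.norm_eq_abs, abs_of_pos hC'pos]
        _ ≤ C' * ((19/20 : ℝ)^K * 20) := by
            exact mul_le_mul_of_nonneg_left htail hC'pos.le
        _ < ε := by
            calc C' * ((19/20 : ℝ)^K * 20) = (C' * 20) * (19/20:ℝ)^K := by ring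
              _ < ε := hK
  · -- exact interpolation on E
    intro m hm
    have hlim : Filter.Tendsto (fun K => ∑ k ∈ Finset.range K, (19/20 : ℂ)^k * ψk k m)
        atTop (𝓝 (f m / C')) := by
      have h1 : Filter.Tendsto (fun K => f m / (C':ℂ) - ∑ k ∈ Finset.range K, (19/20 : ℂ)^k * ψk k m)
          atTop (𝓝 0) := by
        rw [tendsto_zero_iff_norm_tendsto_zero]
        apply squeeze_zero (fun K => norm_nonneg _) (fun K => ?_)
          (g := fun K => (19/20 : ℝ)^K)
        · exact tendsto_pow_atTop_nhds_zero_of_lt_one (by norm_num) (by norm_num)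
        · rw [← htel m hm K, norm_mul, norm_pow]
          have h1 : ‖(19/20 : ℂ)‖ = (19/20 : ℝ) := by
            rw [show (19/20 : ℂ) = ((19/20 : ℝ) : ℂ) by norm_num, Complex.norm_real]
            norm_num
          rw [h1]
          calc (19/20:ℝ)^K * ‖(g K).1 m‖ ≤ (19/20:ℝ)^K * 1 := by
                apply mul_le_mul_of_nonneg_left _ (by positivity)
                exact (g K).2 m hm
            _ = (19/20:ℝ)^K := mul_one _
      have := h1.const_sub (f m / (C':ℂ))
      simpa using this
    have hts : ∑' k, (19/20 : ℂ)^k * ψk k m = f m / C' :=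
      tendsto_nhds_unique (hsum m).hasSum.tendsto_sum_nat hlim
    show (C' : ℂ) * ∑' k, (19/20 : ℂ)^k * ψk k m = f m
    rw [hts, mul_div_cancel₀ _ hC'ne]


def mu (n : ℕ) : ℕ := 2^n + 2*n - 1

lemma mu_add_one (n : ℕ) : mu n + 1 = 2^n + 2*n := by
  have h : 1 ≤ 2^n := Nat.one_le_two_pow
  unfold mu; omega

lemma two_mul_le_pow {n : ℕ} (hn : 1 ≤ n) : 2*n ≤ 2^n := by
  induction n with
  | zero => omega
  | succ n ih =>
    rcases Nat.eq_or_lt_of_le hn with h | h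
    · simp [← h]
    · have h1 : 1 ≤ n := by omega
      have h2 : (2:ℕ) ≤ 2^n := by
        calc (2:ℕ) = 2*1 := by ring
        _ ≤ 2*n := by omega
        _ ≤ 2^n := ih h1
      have := ih h1
      rw [pow_succ]
      omega

lemma mu_strictmono {n n' : ℕ} (h : n < n') : mu n < mu n' := by
  have h1 : 2^n < 2^n' := Nat.pow_lt_pow_right (by norm_num) h
  have h2 : 1 ≤ 2^n := Nat.one_le_two_pow
  unfold mu; omega

lemma pow2_mod15 (m : ℕ) : 2^m % 15 = 2^(m % 4) % 15 := by
  conv_lhs => rw [← Nat.div_add_mod m 4, pow_add, pow_mul, Nat.mul_mod, Nat.pow_mod]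
  norm_num

lemma not_fifteen_dvd (m : ℕ) : ¬ (15 ∣ 2^m + 1) := by
  intro h
  have h1 : (2^m + 1) % 15 = 0 := by omega
  rw [Nat.add_mod, pow2_mod15] at h1
  have hr : m % 4 < 4 := Nat.mod_lt _ (by norm_num)
  interval_cases h : m % 4 <;> simp_all

-- powers of two are even, mu is odd
lemma pow2_even {n : ℕ} (hn : 1 ≤ n) : 2^n % 2 = 0 := by
  obtain ⟨m, rfl⟩ := Nat.exists_eq_add_of_le hn
  rw [pow_add]
  omega

lemma mu_odd {n : ℕ} (hn : 1 ≤ n) : mu n % 2 = 1 := by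
  have h := mu_add_one n
  have h2 := pow2_even hn
  omega

-- gap lemmas mod 30
lemma pow2_gap {n n' : ℕ} (hn : 1 ≤ n) (hlt : n < n') (hmod : 2^n % 30 = 2^n' % 30) :
    n + 3 ≤ n' := by
  by_contra hcon
  push_neg at hcon
  have hdvd : (30:ℕ) ∣ 2^n' - 2^n :=
    (Nat.modEq_iff_dvd' (Nat.pow_le_pow_right (by norm_num) hlt.le)).mp hmod
  rcases (by omega : n' = n+1 ∨ n' = n+2) with rfl | rfl
  · -- n' = n+1 : 2^(n+1) - 2^n = 2^n
    have he : 2^(n+1) - 2^n = 2^n := by rw [pow_succ]; omega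
    rw [he] at hdvd
    have h3 : (3:ℕ) ∣ 2^n := dvd_trans (by norm_num) hdvd
    have := Nat.Prime.dvd_of_dvd_pow Nat.prime_three h3
    norm_num at this
  · -- n' = n+2 : 2^(n+2) - 2^n = 3 * 2^n
    have hp : (2:ℕ)^(n+2) = 4 * 2^n := by rw [pow_add]; ring
    have he : 2^(n+2) - 2^n = 3 * 2^n := by omega
    rw [he] at hdvd
    have h5 : (5:ℕ) ∣ 3 * 2^n := dvd_trans (by norm_num) hdvd
    have h5' : (5:ℕ) ∣ 2^n := (Nat.Coprime.dvd_of_dvd_mul_left (by norm_num) h5)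
    have := Nat.Prime.dvd_of_dvd_pow (by norm_num : Nat.Prime 5) h5'
    norm_num at this

lemma mu_gap {n n' : ℕ} (hn : 1 ≤ n) (hlt : n < n') (hmod : mu n % 30 = mu n' % 30) :
    n + 3 ≤ n' := by
  by_contra hcon
  push_neg at hcon
  have hdvd : (30:ℕ) ∣ mu n' - mu n :=
    (Nat.modEq_iff_dvd' (mu_strictmono hlt).le).mp hmod
  rcases (by omega : n' = n+1 ∨ n' = n+2) with rfl | rfl
  · -- difference = 2^n + 2
    have he : mu (n+1) - mu n = 2^n + 2 := by
      have h1 := mu_add_one n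
      have h2 := mu_add_one (n+1)
      have h3 : 2^(n+1) = 2*2^n := by rw [pow_succ]; ring
      omega
    rw [he] at hdvd
    obtain ⟨m, rfl⟩ := Nat.exists_eq_add_of_le hn
    have h15 : (15:ℕ) ∣ 2^m + 1 := by
      have : 2^(1+m) + 2 = 2 * (2^m + 1) := by rw [pow_add]; ring
      rw [this] at hdvd
      omega
    exact not_fifteen_dvd m h15
  · -- difference = 3*2^n + 4
    have he : mu (n+2) - mu n = 3*2^n + 4 := by
      have h1 := mu_add_one n
      have h2 := mu_add_one (n+2)
      have h3 : 2^(n+2) = 4*2^n := by rw [pow_add]; ring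
      omega
    rw [he] at hdvd
    have h3 : (3:ℕ) ∣ 3*2^n + 4 := dvd_trans (by norm_num) hdvd
    omega

lemma mu_growth {n : ℕ} (hn : 1 ≤ n) : 13 * mu n ≤ 3 * mu (n+3) := by
  have h1 := mu_add_one n
  have h2 := mu_add_one (n+3)
  have h3 : 2^(n+3) = 8*2^n := by rw [pow_add]; ring
  have h4 := two_mul_le_pow hn
  omega

-- periodicity
lemma pow2_period {n : ℕ} (hn : 1 ≤ n) : 2^(n+4) % 30 = 2^n % 30 := by
  obtain ⟨m, rfl⟩ := Nat.exists_eq_add_of_le hn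
  have e1 : 2^(1+m+4) = 32 * 2^m := by
    rw [show 1+m+4 = m+5 from by omega, pow_add]; ring
  have e2 : 2^(1+m) = 2 * 2^m := by rw [pow_add]; ring
  omega

lemma mu_period {n : ℕ} (hn : 1 ≤ n) : mu (n+60) % 30 = mu n % 30 := by
  obtain ⟨m, rfl⟩ := Nat.exists_eq_add_of_le hn
  have h1 := mu_add_one (1+m)
  have h2 := mu_add_one (1+m+60)
  have h3 : 2^(1+m+60) = 2^(1+m) + 30 * (76861433640456465 * 2^m) := by
    rw [show 1+m+60 = m+61 from by omega, pow_add, pow_add]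
    ring
  omega


def Eset : Set ℕ := {m : ℕ | ∃ n : ℕ, 1 ≤ n ∧ m = 2 ^ n} ∪
      {m : ℕ | ∃ n : ℕ, 1 ≤ n ∧ m = 2 ^ n + 2 * n - 1}

def Pa (a : ℕ) : Set ℕ := {m : ℕ | m ∈ Eset ∧ m % 30 = a}

lemma mem_Eset_iff {m : ℕ} : m ∈ Eset ↔ (∃ n, 1 ≤ n ∧ m = 2^n) ∨ (∃ n, 1 ≤ n ∧ m = mu n) :=
  Iff.rfl

lemma Pa_pos (a : ℕ) : ∀ m ∈ Pa a, 1 ≤ m := by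
  rintro m ⟨hm, -⟩
  rcases hm with ⟨n, hn, rfl⟩ | ⟨n, hn, rfl⟩
  · exact Nat.one_le_two_pow
  · have h1 := mu_add_one n
    have h2 : 2 ≤ 2^n := by
      calc 2 = 2^1 := by norm_num
      _ ≤ 2^n := Nat.pow_le_pow_right (by norm_num) hn
    show 1 ≤ mu n
    omega

lemma Pa_ratio (a : ℕ) : ∀ v ∈ Pa a, ∀ w ∈ Pa a, v < w → 13 * v ≤ 3 * w := by
  rintro v ⟨hv, hva⟩ w ⟨hw, hwa⟩ hvw
  have hmod : v % 30 = w % 30 := by rw [hva, hwa]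
  have hparity : v % 2 = w % 2 := by
    have h1 : v % 30 % 2 = v % 2 := Nat.mod_mod_of_dvd v (by norm_num)
    have h2 : w % 30 % 2 = w % 2 := Nat.mod_mod_of_dvd w (by norm_num)
    omega
  have hv' : (∃ n, 1 ≤ n ∧ v = 2^n) ∨ (∃ n, 1 ≤ n ∧ v = mu n) := hv
  have hw' : (∃ n, 1 ≤ n ∧ w = 2^n) ∨ (∃ n, 1 ≤ n ∧ w = mu n) := hw
  clear hv hw
  rcases hv' with ⟨n, hn, rfl⟩ | ⟨n, hn, rfl⟩ <;>
    rcases hw' with ⟨n', hn', rfl⟩ | ⟨n', hn', rfl⟩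
  · -- both powers
    have hlt : n < n' := by
      by_contra hcon
      push_neg at hcon
      have := Nat.pow_le_pow_right (show 0 < 2 by norm_num) hcon
      omega
    have hgap := pow2_gap hn hlt hmod
    have : 2^(n+3) ≤ 2^n' := Nat.pow_le_pow_right (by norm_num) hgap
    have h8 : 2^(n+3) = 8 * 2^n := by rw [pow_add]; ring
    omega
  · -- power vs mu : parity contradiction
    have := pow2_even hn
    have := mu_odd hn'
    omega
  · have := mu_odd hn
    have := pow2_even hn'
    omega
  · -- both mu
    have hlt : n < n' := by
      by_contra hcon
      push_neg at hcon
      rcases Nat.eq_or_lt_of_le hcon with h | h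
      · subst h; omega
      · exact absurd (mu_strictmono h) (by omega)
    have hgap := mu_gap hn hlt hmod
    have hmono : mu (n+3) ≤ mu n' := by
      rcases Nat.eq_or_lt_of_le hgap with h | h
      · rw [h]
      · exact (mu_strictmono h).le
    have := mu_growth hn
    omega

lemma Pa_infinite (a : ℕ) (hne : (Pa a).Nonempty) : (Pa a).Infinite := by
  obtain ⟨m, hmE, hma⟩ := hne
  rcases hmE with ⟨n, hn, rfl⟩ | ⟨n, hn, rfl⟩
  · have hmem : ∀ k : ℕ, 2^(n + 4*k) ∈ Pa a := by
      intro k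
      induction k with
      | zero => exact ⟨Or.inl ⟨n, hn, rfl⟩, by simpa using hma⟩
      | succ k ih =>
        refine ⟨Or.inl ⟨n + 4*(k+1), by omega, rfl⟩, ?_⟩
        have := pow2_period (n := n + 4*k) (by omega)
        have h2 : n + 4*(k+1) = (n + 4*k) + 4 := by ring
        rw [h2, this]
        exact ih.2
    apply Set.infinite_of_injective_forall_mem (f := fun k : ℕ => 2^(n + 4*k)) ?_ hmem
    intro k1 k2 h
    have := Nat.pow_right_injective (le_refl 2) h
    omega
  · have hmem : ∀ k : ℕ, mu (n + 60*k) ∈ Pa a := by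
      intro k
      induction k with
      | zero => exact ⟨Or.inr ⟨n, hn, by simp [mu]⟩, by simpa [mu] using hma⟩
      | succ k ih =>
        refine ⟨Or.inr ⟨n + 60*(k+1), by omega, by simp [mu]⟩, ?_⟩
        have := mu_period (n := n + 60*k) (by omega)
        have h2 : n + 60*(k+1) = (n + 60*k) + 60 := by ring
        rw [h2, this]
        exact ih.2
    apply Set.infinite_of_injective_forall_mem (f := fun k : ℕ => mu (n + 60*k)) ?_ hmem
    intro k1 k2 h
    by_contra hne
    rcases Nat.lt_or_ge k1 k2 with hlt | hge
    · exact absurd h (mu_strictmono (by omega)).ne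
    · have : k2 < k1 := by omega
      exact absurd h.symm (mu_strictmono (by omega)).ne

lemma full_approx : ∀ f : ℕ → ℂ, (∀ m ∈ Eset, norm (f m) ≤ 1) →
    ∃ ψ : ℕ → ℂ, IsTrigPoly ψ ∧ (∀ m, norm (ψ m) ≤ 1) ∧
      ∀ m ∈ Eset, norm (ψ m - f m) ≤ 19/20 := by
  intro f hf
  classical
  have hpiece : ∀ a : ℕ, ∃ ψa : ℕ → ℂ, IsTrigPoly ψa ∧ (∀ m, norm (ψa m) ≤ 1) ∧
      ∀ m ∈ Pa a, norm (ψa m - f m) ≤ 19/20 := by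
    intro a
    by_cases h : (Pa a).Nonempty
    · exact piece_interp (Pa a) (Pa_infinite a h) (Pa_pos a) (Pa_ratio a) f
        (fun m hm => hf m hm.1)
    · rw [Set.not_nonempty_iff_eq_empty] at h
      exact ⟨fun _ => 0, isTrigPoly_zero, fun m => by simp, fun m hm => by simp [h] at hm⟩
  choose Ψ hΨ1 hΨ2 hΨ3 using hpiece
  refine ⟨fun m => ∑ a ∈ Finset.range 30, resInd 30 a m * Ψ a m, ?_, ?_, ?_⟩
  · exact isTrigPoly_sum _ _ (fun a _ => (isTrigPoly_resInd 30 a).mul (hΨ1 a))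
  case _ =>
    -- evaluation key
    have hkey : ∀ m : ℕ, ∑ a ∈ Finset.range 30, resInd 30 a m * Ψ a m = Ψ (m % 30) m := by
      intro m
      have h1 : ∀ a ∈ Finset.range 30, resInd 30 a m * Ψ a m
          = if a = m % 30 then Ψ a m else 0 := by
        intro a ha
        rw [resInd_eq 30 a (by norm_num) m]
        rw [Nat.mod_eq_of_lt (Finset.mem_range.mp ha)]
        by_cases h : a = m % 30
        · rw [if_pos h, if_pos h.symm, one_mul]
        · rw [if_neg h, if_neg (fun hh => h hh.symm), zero_mul]
      rw [Finset.sum_congr rfl h1, Finset.sum_ite_eq' (Finset.range 30) (m % 30) (fun a => Ψ a m)]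
      rw [if_pos (Finset.mem_range.mpr (Nat.mod_lt m (by norm_num)))]
    intro m
    show norm (∑ a ∈ Finset.range 30, resInd 30 a m * Ψ a m) ≤ 1
    rw [hkey m]
    exact hΨ2 _ m
  case _ =>
    have hkey : ∀ m : ℕ, ∑ a ∈ Finset.range 30, resInd 30 a m * Ψ a m = Ψ (m % 30) m := by
      intro m
      have h1 : ∀ a ∈ Finset.range 30, resInd 30 a m * Ψ a m
          = if a = m % 30 then Ψ a m else 0 := by
        intro a ha
        rw [resInd_eq 30 a (by norm_num) m]
        rw [Nat.mod_eq_of_lt (Finset.mem_range.mp ha)]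
        by_cases h : a = m % 30
        · rw [if_pos h, if_pos h.symm, one_mul]
        · rw [if_neg h, if_neg (fun hh => h hh.symm), zero_mul]
      rw [Finset.sum_congr rfl h1, Finset.sum_ite_eq' (Finset.range 30) (m % 30) (fun a => Ψ a m)]
      rw [if_pos (Finset.mem_range.mpr (Nat.mod_lt m (by norm_num)))]
    intro m hm
    show norm ((∑ a ∈ Finset.range 30, resInd 30 a m * Ψ a m) - f m) ≤ 19/20
    rw [hkey m]
    exact hΨ3 (m % 30) m ⟨hm, rfl⟩

theorem part1 : IsI0Set Eset := isI0_of_approx Eset full_approx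


/-- simultaneous approximate recurrence along ℕ, by Bolzano–Weierstrass -/
lemma simul_recurrence (k : ℕ) (β : Fin k → ℝ) (ε : ℝ) (hε : 0 < ε) (M : ℕ) :
    ∃ t : ℕ, M ≤ t ∧ ∀ j, norm
      (Complex.exp (2 * (Real.pi:ℂ) * Complex.I * (t:ℂ) * (β j : ℂ)) - 1) ≤ ε := by
  classical
  set v : ℕ → (Fin k → ℂ) := fun m j => Complex.exp (2 * (Real.pi:ℂ) * Complex.I * (m:ℂ) * (β j : ℂ))
    with hv
  have hball : ∀ m, v m ∈ Metric.closedBall (0 : Fin k → ℂ) 1 := by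
    intro m
    rw [Metric.mem_closedBall, dist_zero_right]
    rw [pi_norm_le_iff_of_nonneg (by norm_num)]
    intro j
    have : 2 * (Real.pi:ℂ) * Complex.I * (m:ℂ) * (β j : ℂ)
        = ((2 * Real.pi * m * β j : ℝ) : ℂ) * Complex.I := by push_cast; ring
    rw [hv]
    simp only
    rw [this, Complex.norm_exp_ofReal_mul_I]
  obtain ⟨a, -, g, hg, hconv⟩ := tendsto_subseq_of_bounded
    (Metric.isBounded_closedBall (x := (0 : Fin k → ℂ)) (r := 1)) hball
  rw [Metric.tendsto_atTop] at hconv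
  obtain ⟨N, hN⟩ := hconv (ε/2) (by linarith)
  set i' : ℕ := max N (g N + M) with hi'
  have hgi' : g N + M ≤ g i' := le_trans (le_max_right _ _) (StrictMono.le_apply hg)
  refine ⟨g i' - g N, by omega, fun j => ?_⟩
  have hcast : ((g i' - g N : ℕ) : ℂ) = (g i' : ℂ) - (g N : ℂ) := by
    push_cast [Nat.cast_sub (by omega : g N ≤ g i')]
    ring
  have hfactor : Complex.exp (2 * (Real.pi:ℂ) * Complex.I * ((g i' - g N : ℕ):ℂ) * (β j : ℂ)) - 1
      = (v (g i') j - v (g N) j) * Complex.exp (-(2 * (Real.pi:ℂ) * Complex.I * ((g N : ℕ):ℂ) * (β j : ℂ))) := by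
    rw [hv]
    simp only
    rw [sub_mul, ← Complex.exp_add, ← Complex.exp_add, hcast]
    congr 2
    · ring
    · rw [← Complex.exp_zero]
      congr 1
      ring
  rw [hfactor, norm_mul]
  have habs1 : norm (Complex.exp (-(2 * (Real.pi:ℂ) * Complex.I * ((g N : ℕ):ℂ) * (β j : ℂ)))) = 1 := by
    have : -(2 * (Real.pi:ℂ) * Complex.I * ((g N : ℕ):ℂ) * (β j : ℂ))
        = ((-(2 * Real.pi * (g N) * β j) : ℝ) : ℂ) * Complex.I := by push_cast; ring
    rw [this, Complex.norm_exp_ofReal_mul_I]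
  rw [habs1, mul_one]
  have hdist : dist (v (g i')) (v (g N)) < ε := by
    calc dist (v (g i')) (v (g N)) ≤ dist (v (g i')) a + dist a (v (g N)) := dist_triangle _ _ _
      _ < ε/2 + ε/2 := by
          have h1 := hN i' (le_max_left _ _)
          have h2 := hN N (le_refl N)
          rw [dist_comm a (v (g N))]
          exact add_lt_add h1 h2
      _ = ε := by ring
  calc norm (v (g i') j - v (g N) j) = dist (v (g i') j) (v (g N) j) := by
        rw [Complex.dist_eq]
      _ ≤ dist (v (g i')) (v (g N)) := dist_le_pi_dist _ _ j
      _ ≤ ε := hdist.le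


theorem part2 : ¬ IsI0Set ({m : ℕ | ∃ n : ℕ, 1 ≤ n ∧ m = 2 ^ n} ∪
      {m : ℕ | ∃ n : ℕ, 1 ≤ n ∧ m = 2 ^ n + 2 * n - 1} ∪
      {m : ℕ | ∃ n : ℕ, 1 ≤ n ∧ m = 2 ^ n + 1} ∪
      {m : ℕ | ∃ n : ℕ, 1 ≤ n ∧ m = 2 ^ n + 2 * n}) := by
  intro hI0
  classical
  set S := ({m : ℕ | ∃ n : ℕ, 1 ≤ n ∧ m = 2 ^ n} ∪
      {m : ℕ | ∃ n : ℕ, 1 ≤ n ∧ m = 2 ^ n + 2 * n - 1} ∪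
      {m : ℕ | ∃ n : ℕ, 1 ≤ n ∧ m = 2 ^ n + 1} ∪
      {m : ℕ | ∃ n : ℕ, 1 ≤ n ∧ m = 2 ^ n + 2 * n}) with hS
  set f : ℕ → ℂ := fun m => if ∃ kk : ℕ, m = 2 ^ kk then 1 else 0 with hf
  obtain ⟨ψ, hAP, hint⟩ := hI0 f ⟨1, by
    intro m _
    rw [hf]
    by_cases h : ∃ kk : ℕ, m = 2 ^ kk <;> simp [h]⟩
  obtain ⟨φ, ⟨k, c, α, hφeq⟩, hφ⟩ := hAP (1/8) (by norm_num)
  set B : ℝ := ∑ j, norm (c j) with hB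
  have hBnn : 0 ≤ B := Finset.sum_nonneg fun j _ => norm_nonneg _
  obtain ⟨t, ht3, hrec⟩ := simul_recurrence k (fun j => 2 * α j) ((1/2)/(B+1))
    (by positivity) 3
  -- the two points
  set a1 : ℕ := 2 ^ t with ha1
  set a2 : ℕ := 2 ^ t + 2 * t with ha2
  have ha1S : a1 ∈ S := by
    rw [hS]
    left; left; left
    exact ⟨t, by omega, rfl⟩
  have ha2S : a2 ∈ S := by
    rw [hS]
    right
    exact ⟨t, by omega, rfl⟩
  have hf1 : f a1 = 1 := by rw [hf]; exact if_pos ⟨t, rfl⟩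
  have hf2 : f a2 = 0 := by
    rw [hf]
    apply if_neg
    rintro ⟨kk, hkk⟩
    have h2t : 2 * t < 2 ^ t := by
      have h3 : 2 * (t-1) ≤ 2^(t-1) := two_mul_le_pow (show 1 ≤ t - 1 by omega)
      have h4 : (2:ℕ)^t = 2 * 2^(t-1) := by
        conv_lhs => rw [show t = (t-1)+1 by omega]
        rw [pow_succ]; ring
      omega
    have hlow : 2 ^ t < 2 ^ kk := by omega
    have hhigh : 2 ^ kk < 2 ^ (t+1) := by
      have : 2^(t+1) = 2 * 2^t := by rw [pow_succ]; ring
      omega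
    have h4 : t < kk := (Nat.pow_lt_pow_iff_right (by norm_num)).mp hlow
    have h5 : kk < t + 1 := (Nat.pow_lt_pow_iff_right (by norm_num)).mp hhigh
    omega
  have hψ1 : ψ a1 = 1 := by rw [hint a1 ha1S, hf1]
  have hψ2 : ψ a2 = 0 := by rw [hint a2 ha2S, hf2]
  -- φ difference is small
  have hdiff : norm (φ a2 - φ a1) ≤ 1/2 := by
    rw [hφeq a2, hφeq a1, ← Finset.sum_sub_distrib]
    refine le_trans (norm_sum_le _ _) ?_
    have hterm : ∀ j : Fin k, norm
        (c j * Complex.exp (2 * Real.pi * Complex.I * (a2 : ℂ) * (α j : ℂ))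
          - c j * Complex.exp (2 * Real.pi * Complex.I * (a1 : ℂ) * (α j : ℂ)))
        ≤ norm (c j) * ((1/2)/(B+1)) := by
      intro j
      rw [← mul_sub, norm_mul]
      apply mul_le_mul_of_nonneg_left _ (norm_nonneg _)
      have hsplit : Complex.exp (2 * Real.pi * Complex.I * (a2 : ℂ) * (α j : ℂ))
          - Complex.exp (2 * Real.pi * Complex.I * (a1 : ℂ) * (α j : ℂ))
          = Complex.exp (2 * Real.pi * Complex.I * (a1 : ℂ) * (α j : ℂ))
            * (Complex.exp (2 * (Real.pi:ℂ) * Complex.I * (t:ℂ) * ((2 * α j : ℝ) : ℂ)) - 1) := by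
        rw [mul_sub, mul_one, ← Complex.exp_add]
        congr 2
        have : (a2 : ℂ) = (a1 : ℂ) + 2 * (t : ℂ) := by
          rw [ha1, ha2]
          push_cast
          ring
        rw [this]
        push_cast
        ring
      rw [hsplit, norm_mul]
      have habs1 : norm (Complex.exp (2 * Real.pi * Complex.I * (a1 : ℂ) * (α j : ℂ))) = 1 := by
        have : 2 * (Real.pi:ℂ) * Complex.I * (a1:ℂ) * (α j : ℂ)
            = ((2 * Real.pi * a1 * α j : ℝ) : ℂ) * Complex.I := by push_cast; ring
        rw [this, Complex.norm_exp_ofReal_mul_I]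
      rw [habs1, one_mul]
      exact hrec j
    refine le_trans (Finset.sum_le_sum fun j _ => hterm j) ?_
    rw [← Finset.sum_mul]
    rw [← hB]
    rw [div_eq_inv_mul]
    calc B * ((B+1)⁻¹ * (1/2)) = (B * (B+1)⁻¹) * (1/2) := by ring
      _ ≤ 1 * (1/2) := by
          apply mul_le_mul_of_nonneg_right _ (by norm_num)
          rw [mul_inv_le_iff₀ (by linarith : (0:ℝ) < B + 1)]
          linarith
      _ = 1/2 := by ring
  -- contradiction
  have h1 := hφ a1
  have h2 := hφ a2
  have hcontr : (1:ℝ) = norm (ψ a1 - ψ a2) := by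
    rw [hψ1, hψ2]
    simp
  have : norm (ψ a1 - ψ a2) ≤ norm (ψ a1 - φ a1) + norm (φ a1 - φ a2)
      + norm (φ a2 - ψ a2) := by
    have e : ψ a1 - ψ a2 = (ψ a1 - φ a1) + (φ a1 - φ a2) + (φ a2 - ψ a2) := by ring
    rw [e]
    refine le_trans (norm_add_le _ _) ?_
    exact add_le_add_left (norm_add_le (ψ a1 - φ a1) (φ a1 - φ a2)) _
  rw [← hcontr] at this
  have h3 : norm (φ a1 - φ a2) ≤ 1/2 := by
    rw [← norm_neg]
    simpa using hdiff
  have h4 : norm (φ a2 - ψ a2) = norm (ψ a2 - φ a2) := by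
    rw [← norm_neg]; congr 1; ring
  rw [h4] at this
  linarith

/-- `{2^n} ∪ {2^n + 2n - 1}` is an `I₀`-set, but its sumset with `{0, 1}`, namely
`{2^n} ∪ {2^n + 2n - 1} ∪ {2^n + 1} ∪ {2^n + 2n}`, is not an `I₀`-set. -/
theorem I0_sum_finite_counterexample :
    IsI0Set ({m : ℕ | ∃ n : ℕ, 1 ≤ n ∧ m = 2 ^ n} ∪
      {m : ℕ | ∃ n : ℕ, 1 ≤ n ∧ m = 2 ^ n + 2 * n - 1}) ∧
    ¬ IsI0Set ({m : ℕ | ∃ n : ℕ, 1 ≤ n ∧ m = 2 ^ n} ∪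
      {m : ℕ | ∃ n : ℕ, 1 ≤ n ∧ m = 2 ^ n + 2 * n - 1} ∪
      {m : ℕ | ∃ n : ℕ, 1 ≤ n ∧ m = 2 ^ n + 1} ∪
      {m : ℕ | ∃ n : ℕ, 1 ≤ n ∧ m = 2 ^ n + 2 * n}) := by
  exact ⟨part1, part2⟩
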